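/- Let K be a field of characteristic zero and n ≥ 2. If φ is a K-algebra automorphism of K[x,y] such that φ(x^{n−i} y^i) = x^{n−i} y^i for all 0 ≤ i ≤ n, then there exists ε ∈ K with ε^n = 1 such that φ(x) = ε x and φ(y) = ε y. -/

import Mathlib

open MvPolynomial

private lemma finSuccEquiv_C' {K : Type*} [Field K] (m : ℕ) (c : K) :
    MvPolynomial.finSuccEquiv K m (C c) = Polynomial.C (C c) := by
  simp [MvPolynomial.finSuccEquiv_apply]

private lemma isUnit_eq_C {K : Type*} [Field K] {Q : MvPolynomial (Fin 2) K}
    (h : IsUnit Q) : ∃ c : K, Q = C c := by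
  have h2 : IsUnit (MvPolynomial.finSuccEquiv K 1 Q) := h.map (MvPolynomial.finSuccEquiv K 1)
  obtain ⟨r, hr, hCr⟩ := Polynomial.isUnit_iff.mp h2
  have h1 : IsUnit (MvPolynomial.finSuccEquiv K 0 r) := hr.map (MvPolynomial.finSuccEquiv K 0)
  obtain ⟨s, hs, hCs⟩ := Polynomial.isUnit_iff.mp h1
  have hc : s = C (constantCoeff s) := MvPolynomial.eq_C_of_isEmpty s
  set c := constantCoeff s with hcdef
  have hr' : r = C c := by
    apply (MvPolynomial.finSuccEquiv K 0).injective
    rw [finSuccEquiv_C', ← hCs, hc]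
  refine ⟨c, ?_⟩
  apply (MvPolynomial.finSuccEquiv K 1).injective
  rw [finSuccEquiv_C', ← hCr, hr']

private lemma pow_eq_pow_X {K : Type*} [Field K] {n : ℕ} (hn : n ≠ 0) (j : Fin 2)
    {P : MvPolynomial (Fin 2) K} (hP : P ^ n = X j ^ n) :
    ∃ ε : K, ε ^ n = 1 ∧ P = C ε * X j := by
  have hprime : Prime (X j : MvPolynomial (Fin 2) K) := by
    let E := (renameEquiv K (Equiv.swap j 0)).trans (MvPolynomial.finSuccEquiv K 1)
    refine (MulEquiv.prime_iff E.toRingEquiv.toMulEquiv).mp ?_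
    have hEX : E.toRingEquiv.toMulEquiv (X j) = Polynomial.X := by
      show E (X j) = Polynomial.X
      simp [E, rename_X, Equiv.swap_apply_left, MvPolynomial.finSuccEquiv_X_zero]
    rw [hEX]
    exact Polynomial.prime_X
  have hdvd : (X j : MvPolynomial (Fin 2) K) ∣ P :=
    hprime.dvd_of_dvd_pow (hP ▸ dvd_pow_self (X j) hn)
  obtain ⟨Q, rfl⟩ := hdvd
  have hXn : (X j : MvPolynomial (Fin 2) K) ^ n ≠ 0 := pow_ne_zero _ (X_ne_zero j)
  have hQ : Q ^ n = 1 := by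
    apply mul_left_cancel₀ hXn
    rw [← mul_pow, hP, mul_one]
  obtain ⟨c, rfl⟩ := isUnit_eq_C (IsUnit.of_pow_eq_one hQ hn)
  refine ⟨c, ?_, mul_comm _ _⟩
  have : (C (c ^ n) : MvPolynomial (Fin 2) K) = C 1 := by
    rw [map_pow, hQ, map_one]
  exact C_injective _ _ this

/-- An automorphism of `K[x,y]` fixing all `x^{n-i} y^i` (`0 ≤ i ≤ n`)
is the scalar automorphism `x ↦ εx, y ↦ εy` for some `n`-th root of unity `ε`. -/
theorem fixing_veronese_is_scalar (K : Type*) [Field K] [CharZero K] (n : ℕ) (hn : 2 ≤ n)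
    (φ : MvPolynomial (Fin 2) K ≃ₐ[K] MvPolynomial (Fin 2) K)
    (h : ∀ i ≤ n, φ (X 0 ^ (n - i) * X 1 ^ i) = X 0 ^ (n - i) * X 1 ^ i) :
    ∃ ε : K, ε ^ n = 1 ∧ φ (X 0) = C ε * X 0 ∧ φ (X 1) = C ε * X 1 := by
  have hn0 : n ≠ 0 := by omega
  have h0 : φ (X 0) ^ n = X 0 ^ n := by
    have := h 0 (Nat.zero_le n)
    simpa only [Nat.sub_zero, pow_zero, mul_one, map_pow] using this
  have hN : φ (X 1) ^ n = X 1 ^ n := by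
    have := h n le_rfl
    simpa only [Nat.sub_self, pow_zero, one_mul, map_pow] using this
  obtain ⟨ε, hε, hX0⟩ := pow_eq_pow_X hn0 0 h0
  obtain ⟨δ, hδ, hX1⟩ := pow_eq_pow_X hn0 1 hN
  have h1 : φ (X 0) ^ (n - 1) * φ (X 1) = X 0 ^ (n - 1) * X 1 := by
    have := h 1 (by omega)
    simpa only [pow_one, map_mul, map_pow] using this
  have hmon : (X 0 : MvPolynomial (Fin 2) K) ^ (n - 1) * X 1 ≠ 0 :=
    mul_ne_zero (pow_ne_zero _ (X_ne_zero 0)) (X_ne_zero 1)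
  have hkey : ε ^ (n - 1) * δ = 1 := by
    have hφ : φ (X 0) ^ (n - 1) * φ (X 1)
        = C (ε ^ (n - 1) * δ) * ((X 0 : MvPolynomial (Fin 2) K) ^ (n - 1) * X 1) := by
      rw [hX0, hX1, mul_pow, ← C_pow, map_mul]
      ring
    rw [hφ] at h1
    have h1' : C (ε ^ (n - 1) * δ) * ((X 0 : MvPolynomial (Fin 2) K) ^ (n - 1) * X 1)
        = 1 * ((X 0 : MvPolynomial (Fin 2) K) ^ (n - 1) * X 1) := by rw [one_mul, h1]
    have := mul_right_cancel₀ hmon h1'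
    exact C_injective _ _ (by rw [this, map_one])
  have hδε : δ = ε := by
    have hpow : ε * ε ^ (n - 1) = ε ^ n := by
      rw [← pow_succ']
      congr 1
      omega
    calc δ = ε ^ n * δ := by rw [hε, one_mul]
      _ = ε * (ε ^ (n - 1) * δ) := by rw [← hpow, mul_assoc]
      _ = ε := by rw [hkey, mul_one]
  exact ⟨ε, hε, hX0, hδε ▸ hX1⟩
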